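/- arXiv:1608.04681 — 5 statements merged into one kernel-verified Lean document; each statement's English description precedes it below -/
import Mathlib

section
/- For every x with 0 < x < 1, one has tanh(x) < 3x·log(coth(x)). -/
set_option maxHeartbeats 1000000

noncomputable def coth (x : ℝ) : ℝ := Real.cosh x / Real.sinh x

private lemma exp_up {x : ℝ} (h0 : 0 ≤ x) (h1 : x ≤ 1) :
    Real.exp x ≤ 1 + x + x^2/2 + x^3/6 + 5*x^4/96 := by
  have h := Real.exp_bound' h0 h1 (n := 4) (by norm_num)
  simp [Finset.sum_range_succ, Nat.factorial] at h
  nlinarith [h]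

theorem tanh_lt_three_mul_log_coth (x : ℝ) (hx0 : 0 < x) (hx1 : x < 1) :
    Real.tanh x < 3 * x * Real.log (coth x) := by
  set a := Real.exp x with ha_def
  have ha1 : 1 < a := by
    rw [ha_def]; exact Real.one_lt_exp_iff.mpr hx0
  have ha0 : 0 < a := by linarith
  have hsinh : Real.sinh x = (a^2 - 1)/(2*a) := by
    rw [Real.sinh_eq, Real.exp_neg, ← ha_def]; field_simp
  have hcosh : Real.cosh x = (a^2 + 1)/(2*a) := by
    rw [Real.cosh_eq, Real.exp_neg, ← ha_def]; field_simp
  have ha2 : 0 < a^2 - 1 := by nlinarith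
  have hcoth : coth x = (a^2 + 1)/(a^2 - 1) := by
    rw [coth, hsinh, hcosh]
    field_simp
  have htanh : Real.tanh x = (a^2 - 1)/(a^2 + 1) := by
    rw [Real.tanh_eq_sinh_div_cosh, hsinh, hcosh]
    field_simp
  have hcoth_pos : 0 < coth x := by rw [hcoth]; positivity
  have hup : a ≤ 1 + x + x^2/2 + x^3/6 + 5*x^4/96 := exp_up hx0.le hx1.le
  have h2pos : (0:ℝ) < a^2 + 1 := by positivity
  by_cases hx9 : x ≤ 9/10
  · -- Piece A : small/mid x
    have hmlt : (1 + x + x^2/2 + x^3/6 + 5*x^4/96)^2 < 1 + 6*x := by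
      nlinarith [sq_nonneg x, sq_nonneg (x-9/10), sq_nonneg (x*x), sq_nonneg (x*x*x),
        sq_nonneg (x*x*x*x), pow_pos hx0 3, pow_pos hx0 4, sq_nonneg (x*x-x), mul_pos hx0 hx0]
    have hA : a^2 < 1 + 6*x := by nlinarith
    -- log (coth x) ≥ 1 - tanh x
    have htanh_pos : 0 < Real.tanh x := by rw [htanh]; positivity
    have hloglb : 1 - Real.tanh x ≤ Real.log (coth x) := by
      have h1 : Real.log (Real.tanh x) ≤ Real.tanh x - 1 := Real.log_le_sub_one_of_pos htanh_pos
      have h2 : coth x = (Real.tanh x)⁻¹ := by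
        rw [coth, Real.tanh_eq_sinh_div_cosh, ← one_div, one_div_div]
      rw [h2, Real.log_inv]
      linarith
    have hkey : Real.tanh x < 3 * x * (1 - Real.tanh x) := by
      have h1t : 1 - Real.tanh x = 2/(a^2+1) := by rw [htanh]; field_simp; norm_num
      rw [h1t, htanh]
      rw [div_lt_iff₀ h2pos]
      have : 3 * x * (2 / (a ^ 2 + 1)) * (a ^ 2 + 1) = 6*x := by field_simp; ring
      rw [this]
      linarith
    have : 3 * x * (1 - Real.tanh x) ≤ 3 * x * Real.log (coth x) :=
      mul_le_mul_of_nonneg_left hloglb (by positivity)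
    linarith
  · -- Piece B : x ∈ (9/10, 1)
    push_neg at hx9
    have hx9' : 9/10 ≤ x := hx9.le
    have halow : 1 + x + x^2/2 ≤ a := Real.quadratic_le_exp_of_nonneg hx0.le
    have ha23 : (23:ℝ)/10 ≤ a := by nlinarith
    have haL : a ≤ (2649 + 49551*x)/19200 := by
      have : 1 + x + x^2/2 + x^3/6 + 5*x^4/96 ≤ (2649 + 49551*x)/19200 := by
        nlinarith [mul_nonneg (sub_nonneg.2 hx9') (sub_nonneg.2 hx1.le), sq_nonneg (x-9/10),
          sq_nonneg (x-1), sq_nonneg x]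
      linarith
    have hq4 : ((2649 + 49551*x)/19200)^4 < (1+6*x)*((2649 + 49551*x)/19200)^2 + 6*x := by
      nlinarith [mul_nonneg (sub_nonneg.2 hx9') (sub_nonneg.2 hx1.le), sq_nonneg (x-9/10),
        sq_nonneg (x-1), sq_nonneg (x-19/20)]
    have hU : a^2 ≤ ((2649 + 49551*x)/19200)^2 := by nlinarith
    have hbig : 0 ≤ a^2 + ((2649 + 49551*x)/19200)^2 - (1 + 6*x) := by nlinarith
    have hquart : a^4 < (1+6*x)*a^2 + 6*x := by
      nlinarith [mul_nonneg (sub_nonneg.2 hU) hbig, hq4]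
    -- v = exp(-(2x)) = 1/a², and 2v ≤ log (coth x)
    have hE : Real.exp (2*x) = a^2 := by rw [two_mul, Real.exp_add, ← ha_def]; ring
    have hb5 : (5:ℝ) ≤ a^2 := by nlinarith
    set v : ℝ := 1/a^2 with hv_def
    have hv0 : 0 < v := by positivity
    have hv5 : v ≤ 1/5 := by
      rw [hv_def, div_le_div_iff₀ (by positivity) (by norm_num)]
      linarith
    have hloglb : 2*v ≤ Real.log (coth x) := by
      rw [Real.le_log_iff_exp_le hcoth_pos, hcoth]
      have hexp2v : Real.exp (2*v) ≤ 1 + 2*v + (2*v)^2/2 + (2*v)^3/6 + 5*(2*v)^4/96 :=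
        exp_up (by positivity) (by linarith)
      have hexp2v' : Real.exp (2*v) ≤ 1 + 2*v + 2*v^2 + 2*v^3 := by
        nlinarith [pow_pos hv0 3, pow_pos hv0 4]
      have hQeq : (1 + 2*v + 2*v^2 + 2*v^3) * (a^2 - 1) = a^2 + 1 - 2*v^3 := by
        rw [hv_def]; field_simp; ring
      rw [le_div_iff₀ ha2]
      have h1 : Real.exp (2*v) * (a^2-1) ≤ (1 + 2*v + 2*v^2 + 2*v^3) * (a^2 - 1) :=
        mul_le_mul_of_nonneg_right hexp2v' ha2.le
      nlinarith [pow_pos hv0 3]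
    have hkey : Real.tanh x < 3 * x * (2*v) := by
      rw [htanh, hv_def]
      have h6 : 3 * x * (2 * (1/a^2)) = 6*x/a^2 := by field_simp; ring
      rw [h6, div_lt_div_iff₀ h2pos (by positivity)]
      nlinarith
    have : 3 * x * (2*v) ≤ 3 * x * Real.log (coth x) :=
      mul_le_mul_of_nonneg_left hloglb (by positivity)
    linarith
end

section
/- For every δ with 0 < δ < 1, the integral ∫₀^δ (1/π)·log(coth(πy/4)) dy is at most (1/π)·δ·log(coth(πδ/4)) + (12/π²)·tanh(πδ/4), and hence is strictly less than (10/π)·δ·log(coth(πδ/4)). -/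
open Real MeasureTheory Set Filter Topology intervalIntegral

lemma sinh_le_mul_cosh {s : ℝ} (hs : 0 ≤ s) : Real.sinh s ≤ s * Real.cosh s := by
  have hmono : MonotoneOn (fun x => x * Real.cosh x - Real.sinh x) (Set.Ici 0) := by
    apply monotoneOn_of_deriv_nonneg (convex_Ici 0)
    · exact (Continuous.sub (continuous_id.mul Real.continuous_cosh)
        Real.continuous_sinh).continuousOn
    · exact ((differentiable_id.mul Real.differentiable_cosh).sub
        Real.differentiable_sinh).differentiableOn
    · intro x hx
      have hd : HasDerivAt (fun x => x * Real.cosh x - Real.sinh x) (x * Real.sinh x) x := by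
        have h := ((hasDerivAt_id x).mul (Real.hasDerivAt_cosh x)).sub (Real.hasDerivAt_sinh x)
        refine h.congr_deriv ?_
        simp only [id_eq]; ring
      rw [hd.deriv]
      rw [interior_Ici] at hx
      have hx0 : (0:ℝ) < x := hx
      have : 0 ≤ Real.sinh x := Real.sinh_nonneg_iff.mpr hx0.le
      positivity
  have h := hmono (Set.self_mem_Ici) hs hs
  simp only [Real.sinh_zero, Real.cosh_zero, mul_one, zero_mul, sub_zero] at h
  linarith

lemma cosh_le_sixteen_tenths {t : ℝ} (h0 : 0 ≤ t) (h1 : t ≤ 1) : Real.cosh t ≤ 1.6 := by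
  have h2 : Real.cosh t ≤ Real.cosh 1 := by
    rw [Real.cosh_le_cosh]
    rw [abs_of_nonneg h0, abs_one]
    exact h1
  have h3 : Real.cosh 1 = (Real.exp 1 + Real.exp (-1)) / 2 := Real.cosh_eq 1
  have he : Real.exp 1 < 2.7182818286 := Real.exp_one_lt_d9
  have he2 : (2.7182818283 : ℝ) < Real.exp 1 := Real.exp_one_gt_d9
  have hprod : Real.exp 1 * Real.exp (-1) = 1 := by
    rw [← Real.exp_add]; norm_num
  have hpos : (0:ℝ) < Real.exp (-1) := Real.exp_pos _
  nlinarith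

lemma exp_lt_five : Real.exp 1.6 < 5 := by
  have h8 : Real.exp 8 = Real.exp 1 ^ 8 := by
    rw [← Real.exp_nat_mul]; norm_num
  have he : Real.exp 1 < 2.7182818286 := Real.exp_one_lt_d9
  have hb : Real.exp 1 ^ 8 < 2.7182818286 ^ 8 :=
    pow_lt_pow_left₀ he (Real.exp_pos 1).le (by norm_num)
  have h16 : Real.exp 1.6 ^ 5 = Real.exp 8 := by
    rw [← Real.exp_nat_mul]; norm_num
  have : Real.exp 1.6 ^ 5 < 5 ^ 5 := by
    rw [h16, h8]
    calc Real.exp 1 ^ 8 < 2.7182818286 ^ 8 := hb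
    _ < 5^5 := by norm_num
  exact lt_of_pow_lt_pow_left₀ 5 (by norm_num) this

lemma integrableOn_log_Ioc {d : ℝ} (h0 : 0 < d) (h1 : d ≤ 1) :
    IntegrableOn Real.log (Set.Ioc 0 d) := by
  set u : ℕ → ℝ := fun n => d / (n + 1) with hu_def
  have hu_pos : ∀ n, 0 < u n := fun n => div_pos h0 (by positivity)
  have hu_le : ∀ n, u n ≤ d := by
    intro n
    apply div_le_self h0.le
    have : (0:ℝ) ≤ (n:ℝ) := Nat.cast_nonneg n
    linarith
  have hu_tendsto : Tendsto u atTop (𝓝 0) := by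
    have h := tendsto_one_div_add_atTop_nhds_zero_nat.const_mul d
    simpa [hu_def, div_eq_mul_inv, one_div] using h
  have hfi : ∀ n, IntegrableOn Real.log (Set.Ioc (u n) d) := by
    intro n
    have hnot : (0:ℝ) ∉ Set.uIcc (u n) d := by
      rw [Set.uIcc_of_le (hu_le n)]
      rintro ⟨h', _⟩
      linarith [hu_pos n]
    exact (intervalIntegrable_iff_integrableOn_Ioc_of_le (hu_le n)).mp
      (intervalIntegrable_log hnot)
  apply integrableOn_Ioc_of_intervalIntegral_norm_bounded_left
    (I := d - d * Real.log d) hfi hu_tendsto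
  apply Filter.Eventually.of_forall
  intro n
  have hnorm : ∫ x in Set.Ioc (u n) d, ‖Real.log x‖ =
      - ∫ x in Set.Ioc (u n) d, Real.log x := by
    rw [← MeasureTheory.integral_neg]
    apply setIntegral_congr_fun measurableSet_Ioc
    intro x hx
    have hx0 : 0 < x := lt_trans (hu_pos n) hx.1
    have hlog : Real.log x ≤ 0 := Real.log_nonpos hx0.le (le_trans hx.2 h1)
    simp only [Real.norm_eq_abs, abs_of_nonpos hlog]
  have hval : ∫ x in Set.Ioc (u n) d, Real.log x =
      d * Real.log d - u n * Real.log (u n) - d + u n := by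
    rw [← intervalIntegral.integral_of_le (hu_le n)]
    exact integral_log
  rw [hnorm, hval]
  have hul : u n * Real.log (u n) ≤ 0 :=
    mul_nonpos_of_nonneg_of_nonpos (hu_pos n).le
      (Real.log_nonpos (hu_pos n).le (le_trans (hu_le n) h1))
  linarith [hu_pos n]

lemma setIntegral_log_Ioc {d : ℝ} (h0 : 0 < d) (h1 : d ≤ 1) :
    ∫ x in Set.Ioc 0 d, Real.log x = d * Real.log d - d := by
  set u : ℕ → ℝ := fun n => d / (n + 1) with hu_def
  have hu_pos : ∀ n, 0 < u n := fun n => div_pos h0 (by positivity)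
  have hu_le : ∀ n, u n ≤ d := by
    intro n
    apply div_le_self h0.le
    have : (0:ℝ) ≤ (n:ℝ) := Nat.cast_nonneg n
    linarith
  have hu_tendsto : Tendsto u atTop (𝓝 0) := by
    have h := tendsto_one_div_add_atTop_nhds_zero_nat.const_mul d
    simpa [hu_def, div_eq_mul_inv, one_div] using h
  have hInt := integrableOn_log_Ioc h0 h1
  have cover : AECover (volume.restrict (Set.Ioc 0 d)) atTop
      (fun n => Set.Ioc (u n) d) :=
    MeasureTheory.aecover_Ioc_of_Ioc hu_tendsto tendsto_const_nhds
  apply cover.integral_eq_of_tendsto _ hInt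
  have key : ∀ n, ∫ x in Set.Ioc (u n) d, Real.log x ∂(volume.restrict (Set.Ioc 0 d)) =
      d * Real.log d - u n * Real.log (u n) - d + u n := by
    intro n
    rw [Measure.restrict_restrict measurableSet_Ioc]
    have hsub : Set.Ioc (u n) d ∩ Set.Ioc 0 d = Set.Ioc (u n) d :=
      Set.inter_eq_self_of_subset_left (Set.Ioc_subset_Ioc_left (hu_pos n).le)
    rw [hsub, ← intervalIntegral.integral_of_le (hu_le n)]
    exact integral_log
  simp_rw [key]
  have hlim : Tendsto (fun n => u n * Real.log (u n)) atTop (𝓝 0) := by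
    have h := tendsto_log_mul_rpow_nhdsGT_zero zero_lt_one
    have hu' : Tendsto u atTop (𝓝[>] 0) :=
      tendsto_nhdsWithin_of_tendsto_nhds_of_eventually_within _ hu_tendsto
        (Filter.Eventually.of_forall fun n => hu_pos n)
    have h2 := h.comp hu'
    simp only [Function.comp_def, Real.rpow_one] at h2
    simpa [mul_comm] using h2
  have hfin : Tendsto (fun n => d * Real.log d - u n * Real.log (u n) - d + u n)
      atTop (𝓝 (d * Real.log d - 0 - d + 0)) :=
    ((tendsto_const_nhds.sub hlim).sub tendsto_const_nhds).add hu_tendsto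
  simpa using hfin

set_option maxHeartbeats 1600000 in
theorem integral_log_coth_bound (δ : ℝ) (hδ0 : 0 < δ) (hδ1 : δ < 1) :
    (∫ y in (0:ℝ)..δ, (1 / Real.pi) * Real.log (coth (Real.pi * y / 4))) ≤
      (1 / Real.pi) * δ * Real.log (coth (Real.pi * δ / 4)) +
        (12 / Real.pi ^ 2) * Real.tanh (Real.pi * δ / 4) ∧
    (∫ y in (0:ℝ)..δ, (1 / Real.pi) * Real.log (coth (Real.pi * y / 4))) <
      (10 / Real.pi) * δ * Real.log (coth (Real.pi * δ / 4)) := by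
  have hπ : 0 < π := Real.pi_pos
  have hπ315 : π < 3.15 := Real.pi_lt_d2
  have hπ314 : 3.14 < π := Real.pi_gt_d2
  set t : ℝ := π * δ / 4 with ht_def
  have ht0 : 0 < t := by positivity
  have ht1 : t < 1 := by rw [ht_def]; nlinarith
  have hsinh : 0 < Real.sinh t := Real.sinh_pos_iff.mpr ht0
  have hcosh1 : 1 ≤ Real.cosh t := Real.one_le_cosh t
  have hcosh0 : 0 < Real.cosh t := lt_of_lt_of_le one_pos hcosh1
  have hsc : Real.sinh t < Real.cosh t := Real.sinh_lt_cosh t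
  have hF1 : Real.sinh t ≤ t * Real.cosh t := sinh_le_mul_cosh ht0.le
  have hts : t ≤ Real.sinh t := (Real.self_lt_sinh_iff.mpr ht0).le
  have hcosh16 : Real.cosh t ≤ 1.6 := cosh_le_sixteen_tenths ht0.le ht1.le
  set L : ℝ := Real.log (coth t) with hL_def
  set T : ℝ := Real.tanh t with hT_def
  have hcoth_pos : 0 < coth t := div_pos hcosh0 hsinh
  have hcoth1 : 1 ≤ coth t := (le_div_iff₀ hsinh).mpr (by linarith)
  have hL0 : 0 ≤ L := Real.log_nonneg hcoth1
  have hT_eq : T = Real.sinh t / Real.cosh t := Real.tanh_eq_sinh_div_cosh t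
  have hT_pos : 0 < T := by rw [hT_eq]; positivity
  have hT_le : T ≤ t := by
    rw [hT_eq, div_le_iff₀ hcosh0]
    exact hF1
  have hT_ge : t / Real.cosh t ≤ T := by
    rw [hT_eq]
    gcongr
  -- coth t ≥ 1/t
  have hcoth_inv : 1 / t ≤ coth t := by
    show 1 / t ≤ Real.cosh t / Real.sinh t
    rw [div_le_div_iff₀ ht0 hsinh]
    linarith
  have hLt : -Real.log t ≤ L := by
    have h := (Real.log_le_log_iff (by positivity) hcoth_pos).mpr hcoth_inv
    rwa [one_div, Real.log_inv] at h
  -- T < 2/3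
  have hT23 : T < 2 / 3 := by
    have h2t : 2 * t < 1.6 := by rw [ht_def]; nlinarith
    have hE2 : Real.exp t ^ 2 < 5 := by
      have h1 : Real.exp t ^ 2 = Real.exp (2 * t) := by
        rw [sq, ← Real.exp_add]; ring_nf
      rw [h1]
      exact lt_trans (Real.exp_lt_exp.mpr h2t) exp_lt_five
    have hE : 0 < Real.exp t := Real.exp_pos t
    have hEm : 0 < Real.exp (-t) := Real.exp_pos (-t)
    have hAB : Real.exp t * Real.exp (-t) = 1 := by
      rw [← Real.exp_add]; simp
    rw [hT_def, Real.tanh_eq_sinh_div_cosh, Real.sinh_eq, Real.cosh_eq]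
    rw [div_lt_iff₀ (by positivity)]
    nlinarith
  -- L ≥ 1 - T
  have hL_ge : 1 - T ≤ L := by
    have h := Real.log_le_sub_one_of_pos (show (0:ℝ) < 1 / coth t by positivity)
    have hinv : 1 / coth t = T := by
      rw [hT_eq, show coth t = Real.cosh t / Real.sinh t from rfl, one_div_div]
    rw [Real.log_div one_ne_zero (ne_of_gt hcoth_pos), Real.log_one, hinv] at h
    linarith
  have hL13 : 1 / 3 < L := by linarith
  -- the comparison function
  set C : ℝ := Real.log (Real.cosh t) - Real.log (π / 4) with hC_def
  set g : ℝ → ℝ := fun y => (1 / π) * (C - Real.log y) with hg_def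
  set f : ℝ → ℝ := fun y => (1 / π) * Real.log (coth (π * y / 4)) with hf_def
  have hC_pos : 0 < C := by
    have h1 : 0 ≤ Real.log (Real.cosh t) := Real.log_nonneg hcosh1
    have h2 : Real.log (π / 4) < 0 := Real.log_neg (by positivity) (by nlinarith)
    rw [hC_def]; linarith
  -- pointwise bound on Ioc 0 δ
  have hpt : ∀ y ∈ Set.Ioc (0:ℝ) δ, Real.log (coth (π * y / 4)) ≤ C - Real.log y := by
    intro y hy
    have hy0 : 0 < y := hy.1
    have hs0 : 0 < π * y / 4 := by positivity
    have hst : π * y / 4 ≤ t := by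
      rw [ht_def]
      have := hy.2
      nlinarith
    have hsinh_s : 0 < Real.sinh (π * y / 4) := Real.sinh_pos_iff.mpr hs0
    have hcosh_s : Real.cosh (π * y / 4) ≤ Real.cosh t := by
      rw [Real.cosh_le_cosh, abs_of_nonneg hs0.le, abs_of_nonneg ht0.le]
      exact hst
    have hss : π * y / 4 ≤ Real.sinh (π * y / 4) := (Real.self_lt_sinh_iff.mpr hs0).le
    have h1 : coth (π * y / 4) ≤ Real.cosh t / (π * y / 4) := by
      unfold coth
      exact div_le_div₀ hcosh0.le hcosh_s hs0 hss
    have hcoth_s_pos : 0 < coth (π * y / 4) :=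
      div_pos (lt_of_lt_of_le one_pos (Real.one_le_cosh _)) hsinh_s
    have h2 := (Real.log_le_log_iff hcoth_s_pos (by positivity)).mpr h1
    rw [Real.log_div (ne_of_gt hcosh0) (ne_of_gt hs0)] at h2
    have h3 : Real.log (π * y / 4) = Real.log (π / 4) + Real.log y := by
      rw [show π * y / 4 = (π / 4) * y by ring,
        Real.log_mul (by positivity) (ne_of_gt hy0)]
    rw [h3] at h2
    rw [hC_def]
    linarith
  -- nonnegativity of f on Ioc
  have hf_nonneg : ∀ y ∈ Set.Ioc (0:ℝ) δ, 0 ≤ f y := by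
    intro y hy
    have hy0 : 0 < y := hy.1
    have hs0 : 0 < π * y / 4 := by positivity
    have hsinh_s : 0 < Real.sinh (π * y / 4) := Real.sinh_pos_iff.mpr hs0
    have hcoth1' : 1 ≤ coth (π * y / 4) := by
      unfold coth
      rw [le_div_iff₀ hsinh_s]
      linarith [Real.sinh_lt_cosh (π * y / 4)]
    have hlogn := Real.log_nonneg hcoth1'
    show 0 ≤ (1 / π) * Real.log (coth (π * y / 4))
    exact mul_nonneg (by positivity) hlogn
  -- integrability of g
  have hg_int : IntegrableOn g (Set.Ioc 0 δ) := by
    apply Integrable.const_mul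
    exact (integrableOn_const measure_Ioc_lt_top.ne).sub
      (integrableOn_log_Ioc hδ0 hδ1.le)
  have hg_intervalInt : IntervalIntegrable g volume 0 δ := by
    rw [intervalIntegrable_iff_integrableOn_Ioc_of_le hδ0.le]
    exact hg_int
  -- measurability of f
  have hf_meas : Measurable f := by
    have hm : Measurable fun y : ℝ => π * y / 4 := by fun_prop
    have : Measurable fun y : ℝ => coth (π * y / 4) := by
      unfold coth
      exact (Real.measurable_cosh.comp hm).div (Real.measurable_sinh.comp hm)
    exact measurable_const.mul (Real.measurable_log.comp this)
  -- integrability of f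
  have hf_int : IntervalIntegrable f volume 0 δ := by
    rw [intervalIntegrable_iff_integrableOn_Ioc_of_le hδ0.le]
    apply Integrable.mono hg_int (hf_meas.aestronglyMeasurable.restrict)
    filter_upwards [ae_restrict_mem measurableSet_Ioc] with y hy
    have h1 : 0 ≤ f y := hf_nonneg y hy
    have h2 : f y ≤ g y := by
      rw [hf_def, hg_def]
      have := hpt y hy
      have h1π : (0:ℝ) < 1 / π := by positivity
      exact mul_le_mul_of_nonneg_left this h1π.le
    rw [Real.norm_eq_abs, Real.norm_eq_abs, abs_of_nonneg h1]
    exact le_trans h2 (le_abs_self _)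
  -- comparison of integrals
  have hle : (∫ y in (0:ℝ)..δ, f y) ≤ ∫ y in (0:ℝ)..δ, g y := by
    apply intervalIntegral.integral_mono_on hδ0.le hf_int hg_intervalInt
    intro y hy
    rcases hy.1.eq_or_lt with h | h
    · -- y = 0
      have hf0 : f y = 0 := by
        rw [hf_def, ← h]
        simp [coth, Real.sinh_zero, Real.cosh_zero]
      have hg0 : 0 ≤ g y := by
        rw [hg_def, ← h]
        simp only [Real.log_zero, sub_zero]
        positivity
      rw [hf0]; exact hg0
    · exact le_trans (le_of_eq rfl) (by
        have := hpt y ⟨h, hy.2⟩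
        rw [hf_def, hg_def]
        have h1π : (0:ℝ) ≤ 1 / π := by positivity
        exact mul_le_mul_of_nonneg_left this h1π)
  -- value of ∫ g
  have hg_val : (∫ y in (0:ℝ)..δ, g y) = (1/π) * (C * δ - (δ * Real.log δ - δ)) := by
    rw [intervalIntegral.integral_of_le hδ0.le]
    rw [hg_def]
    rw [MeasureTheory.integral_const_mul]
    congr 1
    rw [integral_sub (show IntegrableOn (fun _ : ℝ => C) (Set.Ioc 0 δ) volume from integrableOn_const measure_Ioc_lt_top.ne)
      (integrableOn_log_Ioc hδ0 hδ1.le)]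
    rw [setIntegral_const, setIntegral_log_Ioc hδ0 hδ1.le]
    rw [Real.volume_real_Ioc_of_le hδ0.le, sub_zero, smul_eq_mul]
    ring
  -- key arithmetic: C*δ - (δ log δ - δ) ≤ δ L + (12/π) T
  have hlogt : Real.log t = Real.log (π / 4) + Real.log δ := by
    rw [ht_def, show π * δ / 4 = (π / 4) * δ by ring,
      Real.log_mul (by positivity) (ne_of_gt hδ0)]
  have hlogcosh : Real.log (Real.cosh t) ≤ Real.cosh t - 1 :=
    Real.log_le_sub_one_of_pos hcosh0
  have hstep : δ * Real.cosh t ≤ (12 / π) * T := by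
    have h1 : (12 / π) * T ≥ (12 / π) * (t / Real.cosh t) := by
      apply mul_le_mul_of_nonneg_left hT_ge (by positivity)
    have h2 : (12 / π) * (t / Real.cosh t) = 3 * δ / Real.cosh t := by
      rw [ht_def]; field_simp; ring
    have h3 : δ * Real.cosh t ≤ 3 * δ / Real.cosh t := by
      rw [le_div_iff₀ hcosh0]
      have hc2 : Real.cosh t * Real.cosh t ≤ 2.56 := by nlinarith
      nlinarith
    linarith
  have harith : C * δ - (δ * Real.log δ - δ) ≤ δ * L + (12 / π) * T := by
    have hexpand : C * δ - (δ * Real.log δ - δ)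
        = δ * (Real.log (Real.cosh t) - Real.log t + 1) := by
      rw [hC_def, hlogt]; ring
    rw [hexpand]
    have h1 : δ * (-Real.log t) ≤ δ * L := mul_le_mul_of_nonneg_left hLt hδ0.le
    have h2 : δ * (Real.log (Real.cosh t) + 1) ≤ δ * Real.cosh t := by
      apply mul_le_mul_of_nonneg_left _ hδ0.le
      linarith
    nlinarith
  have hbound1 : (∫ y in (0:ℝ)..δ, f y) ≤
      (1 / π) * δ * L + (12 / π ^ 2) * T := by
    calc (∫ y in (0:ℝ)..δ, f y) ≤ ∫ y in (0:ℝ)..δ, g y := hle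
    _ = (1/π) * (C * δ - (δ * Real.log δ - δ)) := hg_val
    _ ≤ (1/π) * (δ * L + (12 / π) * T) := by
        apply mul_le_mul_of_nonneg_left harith (by positivity)
    _ = (1 / π) * δ * L + (12 / π ^ 2) * T := by
        field_simp
  constructor
  · exact hbound1
  · apply lt_of_le_of_lt hbound1
    have h1 : (12 / π ^ 2) * T < (9 / π) * δ * L := by
      have hTt : (12 / π ^ 2) * T ≤ (12 / π ^ 2) * t :=
        mul_le_mul_of_nonneg_left hT_le (by positivity)
      have h2 : (12 / π ^ 2) * t = 3 * δ / π := by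
        rw [ht_def]; field_simp; ring
      have h3 : 3 * δ / π < (9 / π) * δ * L := by
        rw [div_lt_iff₀ hπ]
        have h9 : 9 / π * δ * L * π = 9 * δ * L := by field_simp
        rw [h9]
        nlinarith
      linarith
    have hsplit : (10:ℝ) / π * δ * L = 1 / π * δ * L + 9 / π * δ * L := by ring
    linarith
end

section
/- Let 1/2 < α ≤ 1 (so that 1/α − 1 ≥ 0, in fact 2^{1/α−1} > 1 when α < 1). For every integer n ≥ 2, the sum over j from 2 to n of binom(n,j)·j^{(j−1)/α + 1}·(n+1−j)^{(n+1−j)/α} is strictly less than (2e/(2^{1/α−1} − 1))·n^{n/α + 1}. -/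
open Finset Real

lemma nat_stirling (n j : ℕ) (h : j ≤ n) :
    n.choose j * j ^ j * (n - j) ^ (n - j) ≤ n ^ n := by
  have key := add_pow j (n - j) n
  have hjn : j + (n - j) = n := by omega
  rw [hjn] at key
  have hmem : j ∈ Finset.range (n + 1) := Finset.mem_range.2 (by omega)
  have hs := Finset.single_le_sum
    (f := fun k => j ^ k * (n - j) ^ (n - k) * n.choose k)
    (fun i _ => Nat.zero_le _) hmem
  calc n.choose j * j ^ j * (n - j) ^ (n - j)
      = j ^ j * (n - j) ^ (n - j) * n.choose j := by ring
    _ ≤ ∑ k ∈ Finset.range (n + 1), j ^ k * (n - j) ^ (n - k) * n.choose k := hs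
    _ = n ^ n := key.symm

lemma succ_pow_le_exp_mul (k : ℕ) : ((k : ℝ) + 1) ^ k ≤ Real.exp 1 * (k : ℝ) ^ k := by
  rcases Nat.eq_zero_or_pos k with rfl | hk
  · simp
  · have hk0 : (0 : ℝ) < k := by exact_mod_cast hk
    have h2 : (k : ℝ) * (1 / k + 1) = (k : ℝ) + 1 := by field_simp; ring
    have h1 : (k : ℝ) + 1 ≤ (k : ℝ) * Real.exp (1 / k) := by
      rw [← h2]
      exact mul_le_mul_of_nonneg_left (Real.add_one_le_exp _) hk0.le
    calc ((k : ℝ) + 1) ^ k ≤ ((k : ℝ) * Real.exp (1 / k)) ^ k :=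
          pow_le_pow_left₀ (by positivity) h1 k
      _ = (k : ℝ) ^ k * Real.exp (1 / k) ^ k := mul_pow _ _ _
      _ = Real.exp 1 * (k : ℝ) ^ k := by
          rw [← Real.exp_nat_mul]
          rw [show (k : ℝ) * (1 / k) = 1 by field_simp]
          ring

lemma hmul3 (a1 b1 c1 a2 b2 c2 : ℝ) (ha1 : 0 ≤ a1) (hb1 : 0 ≤ b1) (hc1 : 0 ≤ c1)
    (ha2 : 0 ≤ a2) (hb2 : 0 ≤ b2)
    (h1 : a1 ≤ a2) (h2 : b1 ≤ b2) (h3 : c1 ≤ c2) : a1 * (b1 * c1) ≤ a2 * (b2 * c2) := by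
  have h4 : b1 * c1 ≤ b2 * c2 := mul_le_mul h2 h3 hc1 hb2
  exact mul_le_mul h1 h4 (mul_nonneg hb1 hc1) ha2

set_option maxHeartbeats 1600000 in
theorem gevrey_sum_bound (α : ℝ) (hα1 : 1 / 2 < α) (hα2 : α < 1) (n : ℕ) (hn : 2 ≤ n) :
    ∑ j ∈ Finset.Icc 2 n, (n.choose j : ℝ) * (j : ℝ) ^ (((j : ℝ) - 1) / α + 1) *
        ((n : ℝ) + 1 - (j : ℝ)) ^ (((n : ℝ) + 1 - (j : ℝ)) / α) <
      (2 * Real.exp 1 / (2 ^ (1 / α - 1) - 1)) * (n : ℝ) ^ ((n : ℝ) / α + 1) := by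
  have hα0 : (0 : ℝ) < α := by linarith
  set γ : ℝ := 1 / α - 1 with hγdef
  have hγ0 : 0 < γ := by
    have : 1 < 1 / α := by rw [lt_div_iff₀ hα0]; linarith
    simp only [hγdef]; linarith
  have hγ1 : γ < 1 := by
    have : 1 / α < 2 := by rw [div_lt_iff₀ hα0]; linarith
    simp only [hγdef]; linarith
  have hn0 : (0 : ℝ) < (n : ℝ) := by exact_mod_cast (by omega : 0 < n)
  set x : ℝ := (1 / 2 : ℝ) ^ γ with hxdef
  have hx0 : 0 < x := Real.rpow_pos_of_pos (by norm_num) _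
  have hx1 : x < 1 := Real.rpow_lt_one (by norm_num) (by norm_num) hγ0
  have h1x : (0 : ℝ) < 1 - x := by linarith
  set g : ℝ := (2 : ℝ) ^ γ with hgdef
  have hg1 : 1 < g := by
    rw [hgdef, Real.one_lt_rpow_iff_of_pos (by norm_num)]
    left; exact ⟨by norm_num, hγ0⟩
  have hq0 : 0 < g - 1 := by linarith
  have hxg : x * g = 1 := by
    rw [hxdef, hgdef, ← Real.mul_rpow (by norm_num) (by norm_num)]
    norm_num
  set c : ℝ := 2 / 3 * ((8 : ℝ) / 27) ^ γ with hcdef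
  have hc0 : 0 < c := by rw [hcdef]; positivity
  set M : ℝ := (n : ℝ) ^ ((n : ℝ) / α + 1) with hMdef
  have hM0 : 0 < M := Real.rpow_pos_of_pos hn0 _
  have hE0 : (0 : ℝ) < Real.exp 1 := Real.exp_pos 1
  set w : ℕ → ℝ := fun j => x ^ (j - 1) + 1 / 2 * x ^ (n + 1 - j) +
    (if 2 * j = n + 1 then c else 0) with hwdef
  -- per-term bound
  have key : ∀ j ∈ Finset.Icc 2 n,
      (n.choose j : ℝ) * (j : ℝ) ^ (((j : ℝ) - 1) / α + 1) *
        ((n : ℝ) + 1 - (j : ℝ)) ^ (((n : ℝ) + 1 - (j : ℝ)) / α) ≤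
      Real.exp 1 * M * w j := by
    intro j hj
    rw [Finset.mem_Icc] at hj
    obtain ⟨hj2, hjn⟩ := hj
    have hJ2 : (2 : ℝ) ≤ (j : ℝ) := by exact_mod_cast hj2
    have hJN : (j : ℝ) ≤ (n : ℝ) := by exact_mod_cast hjn
    have hJ0 : (0 : ℝ) < (j : ℝ) := by linarith
    set J : ℝ := (j : ℝ) with hJdef
    set N : ℝ := (n : ℝ) with hNdef
    set B : ℝ := N + 1 - J with hBdef
    have hB1 : (1 : ℝ) ≤ B := by rw [hBdef]; linarith
    have hB0 : (0 : ℝ) < B := by linarith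
    have hBN : B ≤ N := by rw [hBdef]; linarith
    set k : ℕ := n - j with hkdef
    have hK : ((k : ℕ) : ℝ) = N - J := by
      rw [hkdef, hNdef, hJdef]; push_cast [Nat.cast_sub hjn]; ring
    have hBK : B = ((k : ℕ) : ℝ) + 1 := by rw [hK, hBdef]; ring
    have hb : ((n + 1 - j : ℕ) : ℝ) = B := by
      rw [hBdef, hNdef, hJdef]; push_cast [Nat.cast_sub (by omega : j ≤ n + 1)]; ring
    have hexp1 : 0 ≤ (J - 1) * γ := mul_nonneg (by linarith) hγ0.le
    have hexp2 : 0 ≤ B * γ := mul_nonneg hB0.le hγ0.le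
    -- Stirling
    have hst : (n.choose j : ℝ) * J ^ (j : ℕ) * ((k : ℕ) : ℝ) ^ (k : ℕ) ≤ N ^ (n : ℝ) := by
      rw [Real.rpow_natCast, hJdef, hNdef, hkdef]
      exact_mod_cast nat_stirling n j hjn
    -- exponent rewrites
    have e1 : J ^ ((J - 1) / α + 1) = J ^ ((J - 1) * γ) * J ^ (j : ℕ) := by
      rw [← Real.rpow_natCast J j, ← Real.rpow_add hJ0]
      congr 1
      rw [hγdef, hJdef]; field_simp; ring
    have e2 : B ^ (B / α) = B ^ (B * γ) * B * B ^ (k : ℕ) := by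
      have h7 : B ^ (B / α) = B ^ (B * γ + (1 + (k : ℕ))) := by
        congr 1
        rw [hγdef, hBK]; field_simp; ring
      rw [h7, Real.rpow_add hB0, Real.rpow_add hB0, Real.rpow_one, Real.rpow_natCast]
      ring
    have hBk : B ^ (k : ℕ) ≤ Real.exp 1 * ((k : ℕ) : ℝ) ^ (k : ℕ) := by
      rw [hBK]; exact succ_pow_le_exp_mul k
    -- main product bound
    have step1 : (n.choose j : ℝ) * J ^ ((J - 1) / α + 1) * B ^ (B / α) ≤
        Real.exp 1 * N ^ (n : ℝ) * (J ^ ((J - 1) * γ) * (B ^ (B * γ) * B)) := by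
      rw [e1, e2]
      have h5 : (n.choose j : ℝ) * (J ^ ((J - 1) * γ) * J ^ (j : ℕ)) *
            (B ^ (B * γ) * B * B ^ (k : ℕ))
          = ((n.choose j : ℝ) * J ^ (j : ℕ)) * B ^ (k : ℕ) *
            (J ^ ((J - 1) * γ) * (B ^ (B * γ) * B)) := by
        ring
      rw [h5]
      have h6 : ((n.choose j : ℝ) * J ^ (j : ℕ)) * B ^ (k : ℕ) ≤ Real.exp 1 * N ^ (n : ℝ) := by
        calc ((n.choose j : ℝ) * J ^ (j : ℕ)) * B ^ (k : ℕ)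
            ≤ ((n.choose j : ℝ) * J ^ (j : ℕ)) * (Real.exp 1 * ((k : ℕ) : ℝ) ^ (k : ℕ)) := by
              apply mul_le_mul_of_nonneg_left hBk
              positivity
          _ = Real.exp 1 * ((n.choose j : ℝ) * J ^ (j : ℕ) * ((k : ℕ) : ℝ) ^ (k : ℕ)) := by ring
          _ ≤ Real.exp 1 * N ^ (n : ℝ) := mul_le_mul_of_nonneg_left hst hE0.le
      apply mul_le_mul_of_nonneg_right h6
      positivity
    -- combine N powers
    have hMeq : N ^ (n : ℝ) * (N ^ ((J - 1) * γ) * (N ^ (B * γ) * N)) = M := by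
      rw [show N ^ (B * γ) * N = N ^ (B * γ + 1) by rw [Real.rpow_add hn0, Real.rpow_one]]
      rw [← Real.rpow_add hn0, ← Real.rpow_add hn0, hMdef]
      congr 1
      rw [hγdef, hBdef, hNdef, hJdef]
      field_simp
      ring
    have hEN : (0:ℝ) ≤ Real.exp 1 * N ^ (n : ℝ) := by positivity
    have hwn1 : Real.exp 1 * M * (x ^ (j - 1) : ℝ) ≤ Real.exp 1 * M * w j := by
      apply mul_le_mul_of_nonneg_left _ (by positivity : (0:ℝ) ≤ Real.exp 1 * M)
      simp only [hwdef]
      have h8 : (0:ℝ) ≤ if 2 * j = n + 1 then c else 0 := by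
        split_ifs; exacts [hc0.le, le_rfl]
      have hx3 : (0:ℝ) ≤ 1 / 2 * x ^ (n + 1 - j) := by positivity
      linarith
    have hwn2 : Real.exp 1 * M * (1 / 2 * x ^ (n + 1 - j) : ℝ) ≤ Real.exp 1 * M * w j := by
      apply mul_le_mul_of_nonneg_left _ (by positivity : (0:ℝ) ≤ Real.exp 1 * M)
      simp only [hwdef]
      have h8 : (0:ℝ) ≤ if 2 * j = n + 1 then c else 0 := by
        split_ifs; exacts [hc0.le, le_rfl]
      have hx2 : (0:ℝ) ≤ x ^ (j - 1) := by positivity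
      linarith
    -- case analysis
    rcases lt_trichotomy (2 * j) (n + 1) with hcase | hcase | hcase
    · -- left case : 2*j ≤ n
      have hJhalf : J ≤ N * (1 / 2) := by
        rw [hJdef, hNdef]
        have h9 : ((2 * j : ℕ) : ℝ) ≤ (n : ℝ) := by exact_mod_cast (by omega : 2 * j ≤ n)
        push_cast at h9; linarith
      have hhalf : ((1:ℝ) / 2) ^ ((J - 1) * γ) = x ^ (j - 1) := by
        rw [mul_comm, Real.rpow_mul (by norm_num : (0:ℝ) ≤ 1/2), ← hxdef]
        rw [show J - 1 = ((j - 1 : ℕ) : ℝ) by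
          rw [hJdef]; push_cast [Nat.cast_sub (by omega : 1 ≤ j)]; ring]
        rw [Real.rpow_natCast]
      calc (n.choose j : ℝ) * J ^ ((J - 1) / α + 1) * B ^ (B / α)
          ≤ Real.exp 1 * N ^ (n : ℝ) * (J ^ ((J - 1) * γ) * (B ^ (B * γ) * B)) := step1
        _ ≤ Real.exp 1 * N ^ (n : ℝ) *
            ((N * (1 / 2)) ^ ((J - 1) * γ) * (N ^ (B * γ) * N)) := by
            apply mul_le_mul_of_nonneg_left _ hEN
            exact hmul3 _ _ _ _ _ _ (Real.rpow_nonneg hJ0.le _) (Real.rpow_nonneg hB0.le _)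
              hB0.le (Real.rpow_nonneg (by positivity) _) (Real.rpow_nonneg hn0.le _)
              (Real.rpow_le_rpow hJ0.le hJhalf hexp1)
              (Real.rpow_le_rpow hB0.le hBN hexp2) hBN
        _ = Real.exp 1 * (N ^ (n : ℝ) * (N ^ ((J - 1) * γ) * (N ^ (B * γ) * N))) *
            x ^ (j - 1) := by
            rw [Real.mul_rpow hn0.le (by norm_num), hhalf]; ring
        _ = Real.exp 1 * M * x ^ (j - 1) := by rw [hMeq]
        _ ≤ Real.exp 1 * M * w j := hwn1
    · -- middle case : 2*j = n+1
      have h2j : (2 : ℝ) * J = N + 1 := by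
        rw [hJdef, hNdef]; exact_mod_cast hcase
      have hn3 : 3 ≤ n := by omega
      have hN3 : (3 : ℝ) ≤ N := by rw [hNdef]; exact_mod_cast hn3
      have hBJ : B = J := by rw [hBdef]; linarith
      have hJ23 : J ≤ N * (2 / 3) := by
        have h9 : 3 * j ≤ 2 * n := by omega
        have h10 : (3:ℝ) * J ≤ 2 * N := by
          rw [hJdef, hNdef]; exact_mod_cast h9
        linarith
      have hB23 : B ≤ N * (2 / 3) := by rw [hBJ]; exact hJ23
      have hsum3 : (J - 1) + B = N := by rw [hBdef]; ring
      have hpow23 : ((2:ℝ)/3) ^ ((J - 1) * γ) * ((2:ℝ)/3) ^ (B * γ) ≤ ((8:ℝ)/27) ^ γ := by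
        calc ((2:ℝ)/3) ^ ((J - 1) * γ) * ((2:ℝ)/3) ^ (B * γ)
            = ((2:ℝ)/3) ^ (((J - 1) + B) * γ) := by
              rw [← Real.rpow_add (by norm_num : (0:ℝ) < 2/3)]; congr 1; ring
          _ ≤ ((2:ℝ)/3) ^ ((3:ℝ) * γ) := by
              apply Real.rpow_le_rpow_of_exponent_ge (by norm_num) (by norm_num)
              rw [hsum3]
              exact mul_le_mul_of_nonneg_right hN3 hγ0.le
          _ = ((8:ℝ)/27) ^ γ := by
              rw [Real.rpow_mul (by norm_num : (0:ℝ) ≤ 2/3)]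
              congr 1
              rw [show (3:ℝ) = ((3:ℕ):ℝ) by norm_num, Real.rpow_natCast]
              norm_num
      calc (n.choose j : ℝ) * J ^ ((J - 1) / α + 1) * B ^ (B / α)
          ≤ Real.exp 1 * N ^ (n : ℝ) * (J ^ ((J - 1) * γ) * (B ^ (B * γ) * B)) := step1
        _ ≤ Real.exp 1 * N ^ (n : ℝ) *
            ((N * (2 / 3)) ^ ((J - 1) * γ) * ((N * (2 / 3)) ^ (B * γ) * (N * (2 / 3)))) := by
            apply mul_le_mul_of_nonneg_left _ hEN
            exact hmul3 _ _ _ _ _ _ (Real.rpow_nonneg hJ0.le _) (Real.rpow_nonneg hB0.le _)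
              hB0.le (Real.rpow_nonneg (by positivity) _) (Real.rpow_nonneg (by positivity) _)
              (Real.rpow_le_rpow hJ0.le hJ23 hexp1)
              (Real.rpow_le_rpow hB0.le hB23 hexp2) hB23
        _ = Real.exp 1 * (N ^ (n : ℝ) * (N ^ ((J - 1) * γ) * (N ^ (B * γ) * N))) *
            (((2:ℝ)/3) ^ ((J - 1) * γ) * ((2:ℝ)/3) ^ (B * γ) * (2 / 3)) := by
            rw [Real.mul_rpow hn0.le (by norm_num), Real.mul_rpow hn0.le (by norm_num)]; ring
        _ = Real.exp 1 * M * (((2:ℝ)/3) ^ ((J - 1) * γ) * ((2:ℝ)/3) ^ (B * γ) * (2 / 3)) := by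
            rw [hMeq]
        _ ≤ Real.exp 1 * M * (((8:ℝ)/27) ^ γ * (2 / 3)) := by
            apply mul_le_mul_of_nonneg_left _ (by positivity : (0:ℝ) ≤ Real.exp 1 * M)
            apply mul_le_mul_of_nonneg_right hpow23 (by norm_num)
        _ ≤ Real.exp 1 * M * w j := by
            apply mul_le_mul_of_nonneg_left _ (by positivity : (0:ℝ) ≤ Real.exp 1 * M)
            simp only [hwdef, if_pos hcase]
            have hx2 : (0:ℝ) ≤ x ^ (j - 1) := by positivity
            have hx3 : (0:ℝ) ≤ 1 / 2 * x ^ (n + 1 - j) := by positivity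
            rw [hcdef]
            linarith
    · -- right case : n+2 ≤ 2*j
      have hBhalf : B ≤ N * (1 / 2) := by
        rw [hBdef, hJdef, hNdef]
        have h9 : ((n : ℕ) : ℝ) + 2 ≤ 2 * (j : ℝ) := by
          exact_mod_cast (by omega : n + 2 ≤ 2 * j)
        linarith
      have hhalf : ((1:ℝ) / 2) ^ (B * γ) = x ^ (n + 1 - j) := by
        rw [mul_comm, Real.rpow_mul (by norm_num : (0:ℝ) ≤ 1/2), ← hxdef]
        rw [show B = ((n + 1 - j : ℕ) : ℝ) from hb.symm, Real.rpow_natCast]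
      calc (n.choose j : ℝ) * J ^ ((J - 1) / α + 1) * B ^ (B / α)
          ≤ Real.exp 1 * N ^ (n : ℝ) * (J ^ ((J - 1) * γ) * (B ^ (B * γ) * B)) := step1
        _ ≤ Real.exp 1 * N ^ (n : ℝ) *
            (N ^ ((J - 1) * γ) * ((N * (1 / 2)) ^ (B * γ) * (N * (1 / 2)))) := by
            apply mul_le_mul_of_nonneg_left _ hEN
            exact hmul3 _ _ _ _ _ _ (Real.rpow_nonneg hJ0.le _) (Real.rpow_nonneg hB0.le _)
              hB0.le (Real.rpow_nonneg hn0.le _) (Real.rpow_nonneg (by positivity) _)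
              (Real.rpow_le_rpow hJ0.le hJN hexp1)
              (Real.rpow_le_rpow hB0.le hBhalf hexp2) hBhalf
        _ = Real.exp 1 * (N ^ (n : ℝ) * (N ^ ((J - 1) * γ) * (N ^ (B * γ) * N))) *
            (1 / 2 * x ^ (n + 1 - j)) := by
            rw [Real.mul_rpow hn0.le (by norm_num), hhalf]; ring
        _ = Real.exp 1 * M * (1 / 2 * x ^ (n + 1 - j)) := by rw [hMeq]
        _ ≤ Real.exp 1 * M * w j := hwn2
  -- geometric sums
  have hicc : Finset.Icc 2 n = Finset.Ico 2 (n + 1) := (Finset.Ico_add_one_right_eq_Icc ..).symm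
  have hgeo : ∑ i ∈ Finset.range (n + 1 - 2), x ^ (i + 1) ≤ 1 / (g - 1) := by
    have h11 : ∀ i : ℕ, x ^ (i + 1) = x * x ^ i := fun i => by rw [pow_succ]; ring
    calc ∑ i ∈ Finset.range (n + 1 - 2), x ^ (i + 1)
        = x * ∑ i ∈ Finset.range (n + 1 - 2), x ^ i := by
          rw [Finset.mul_sum]; exact Finset.sum_congr rfl fun i _ => h11 i
      _ ≤ x * (1 / (1 - x)) := by
          apply mul_le_mul_of_nonneg_left _ hx0.le
          rw [geom_sum_eq hx1.ne]
          rw [show (x ^ (n + 1 - 2) - 1) / (x - 1) = (1 - x ^ (n + 1 - 2)) / (1 - x) by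
            rw [div_eq_div_iff (by linarith : x - 1 < 0).ne h1x.ne']; ring]
          rw [div_le_div_iff₀ h1x h1x]
          nlinarith [pow_nonneg hx0.le (n + 1 - 2)]
      _ = 1 / (g - 1) := by
          rw [mul_one_div, div_eq_div_iff h1x.ne' hq0.ne']
          linear_combination hxg
  have hs1 : ∑ j ∈ Finset.Icc 2 n, x ^ (j - 1) ≤ 1 / (g - 1) := by
    rw [hicc, Finset.sum_Ico_eq_sum_range]
    calc ∑ i ∈ Finset.range (n + 1 - 2), x ^ (2 + i - 1)
        = ∑ i ∈ Finset.range (n + 1 - 2), x ^ (i + 1) :=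
          Finset.sum_congr rfl fun i _ => by congr 1; omega
      _ ≤ 1 / (g - 1) := hgeo
  have hs2 : ∑ j ∈ Finset.Icc 2 n, x ^ (n + 1 - j) ≤ 1 / (g - 1) := by
    rw [hicc, Finset.sum_Ico_eq_sum_range]
    calc ∑ i ∈ Finset.range (n + 1 - 2), x ^ (n + 1 - (2 + i))
        = ∑ i ∈ Finset.range (n + 1 - 2), x ^ (n + 1 - 2 - 1 - i + 1) :=
          Finset.sum_congr rfl fun i hi => by
            rw [Finset.mem_range] at hi; congr 1; omega
      _ = ∑ i ∈ Finset.range (n + 1 - 2), x ^ (i + 1) :=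
          Finset.sum_range_reflect (fun i => x ^ (i + 1)) (n + 1 - 2)
      _ ≤ 1 / (g - 1) := hgeo
  have hs3 : ∑ j ∈ Finset.Icc 2 n, (if 2 * j = n + 1 then c else 0) ≤ c := by
    have hpt : ∀ j ∈ Finset.Icc 2 n,
        (if 2 * j = n + 1 then c else 0) ≤ (if j = (n + 1) / 2 then c else 0) := by
      intro j hj
      by_cases h1 : 2 * j = n + 1
      · rw [if_pos h1, if_pos (by omega)]
      · rw [if_neg h1]
        split_ifs; exacts [hc0.le, le_rfl]
    calc ∑ j ∈ Finset.Icc 2 n, (if 2 * j = n + 1 then c else 0)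
        ≤ ∑ j ∈ Finset.Icc 2 n, (if j = (n + 1) / 2 then c else 0) := Finset.sum_le_sum hpt
      _ ≤ c := by
          rw [Finset.sum_ite_eq']
          split_ifs; exacts [le_rfl, hc0.le]
  -- final numeric inequality
  have hu1 : ((8:ℝ)/27) ^ γ ≤ 1 - 19/27 * γ := by
    have h20 := rpow_one_add_le_one_add_mul_self (s := -(19/27)) (by norm_num) hγ0.le hγ1.le
    rw [show (1:ℝ) + -(19/27) = 8/27 by norm_num] at h20
    linarith
  have hg2 : g - 1 ≤ γ := by
    have h21 := rpow_one_add_le_one_add_mul_self (s := (1:ℝ)) (by norm_num) hγ0.le hγ1.le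
    rw [show (1:ℝ) + 1 = 2 by norm_num] at h21
    rw [hgdef]; linarith
  have hu0 : (0:ℝ) < ((8:ℝ)/27) ^ γ := Real.rpow_pos_of_pos (by norm_num) _
  have h16 : ((8:ℝ)/27) ^ γ * (g - 1) ≤ (1 - 19/27 * γ) * γ :=
    mul_le_mul hu1 hg2 hq0.le (by linarith)
  have hc2 : c < 1 / 2 * (1 / (g - 1)) := by
    have h14 : c * (2 * (g - 1)) < 1 := by
      rw [hcdef]
      nlinarith [h16, sq_nonneg (γ - 27/38), hu0, hq0]
    have h15 : c < 1 / (2 * (g - 1)) := by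
      rw [lt_div_iff₀ (by positivity)]; exact h14
    calc c < 1 / (2 * (g - 1)) := h15
      _ = 1 / 2 * (1 / (g - 1)) := by rw [one_div, one_div, one_div, mul_inv]
  calc ∑ j ∈ Finset.Icc 2 n, (n.choose j : ℝ) * (j : ℝ) ^ (((j : ℝ) - 1) / α + 1) *
        ((n : ℝ) + 1 - (j : ℝ)) ^ (((n : ℝ) + 1 - (j : ℝ)) / α)
      ≤ ∑ j ∈ Finset.Icc 2 n, Real.exp 1 * M * w j := Finset.sum_le_sum key
    _ = Real.exp 1 * M * ∑ j ∈ Finset.Icc 2 n, w j := by rw [Finset.mul_sum]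
    _ ≤ Real.exp 1 * M * (1 / (g - 1) + 1 / 2 * (1 / (g - 1)) + c) := by
        apply mul_le_mul_of_nonneg_left _ (by positivity : (0:ℝ) ≤ Real.exp 1 * M)
        have hsplit : ∑ j ∈ Finset.Icc 2 n, w j =
            (∑ j ∈ Finset.Icc 2 n, x ^ (j - 1)) +
            1 / 2 * (∑ j ∈ Finset.Icc 2 n, x ^ (n + 1 - j)) +
            ∑ j ∈ Finset.Icc 2 n, (if 2 * j = n + 1 then c else 0) := by
          simp only [hwdef]
          rw [Finset.sum_add_distrib, Finset.sum_add_distrib, Finset.mul_sum]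
        rw [hsplit]
        have h12 : (1:ℝ) / 2 * (∑ j ∈ Finset.Icc 2 n, x ^ (n + 1 - j)) ≤
            1 / 2 * (1 / (g - 1)) := mul_le_mul_of_nonneg_left hs2 (by norm_num)
        linarith
    _ < 2 * Real.exp 1 / (g - 1) * M := by
        have hlt : 1 / (g - 1) + 1 / 2 * (1 / (g - 1)) + c < 2 / (g - 1) := by
          have h13 : (2:ℝ) / (g - 1) = 2 * (1 / (g - 1)) := by ring
          linarith
        calc Real.exp 1 * M * (1 / (g - 1) + 1 / 2 * (1 / (g - 1)) + c)
            < Real.exp 1 * M * (2 / (g - 1)) :=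
              mul_lt_mul_of_pos_left hlt (by positivity)
          _ = 2 * Real.exp 1 / (g - 1) * M := by ring
end

section
/- Riccati-type comparison with forcing: let v : [0,T] → ℝ be continuously differentiable with v(t) < 0 for all t, and suppose v'(t) = −v(t)² − K(t) where |K(t)| ≤ ε·v(t)² for all t, with 0 < ε < 1. Then for all t ∈ [0,T], v(0)/(1 + (1+ε)·v(0)·t) ≤ v(t) ≤ v(0)/(1 + (1−ε)·v(0)·t), whenever the denominators are positive on [0,t]. -/
/-- Riccati-type comparison with forcing. -/
theorem riccati_comparison (T ε : ℝ) (hT : 0 < T) (hε0 : 0 < ε) (hε1 : ε < 1)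
    (v K : ℝ → ℝ) (hK : ContinuousOn K (Set.Icc 0 T))
    (hv' : ∀ t ∈ Set.Icc 0 T, HasDerivAt v (-(v t) ^ 2 - K t) t)
    (hvneg : ∀ t ∈ Set.Icc 0 T, v t < 0)
    (hKv : ∀ t ∈ Set.Icc 0 T, |K t| ≤ ε * (v t) ^ 2)
    (hden : ∀ t ∈ Set.Icc 0 T,
      0 < 1 + (1 + ε) * v 0 * t ∧ 0 < 1 + (1 - ε) * v 0 * t) :
    ∀ t ∈ Set.Icc 0 T,
      v 0 / (1 + (1 + ε) * v 0 * t) ≤ v t ∧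
        v t ≤ v 0 / (1 + (1 - ε) * v 0 * t) := by
  intro t ht
  obtain ⟨ht0, htT⟩ := ht
  have h0T : (0:ℝ) ∈ Set.Icc (0:ℝ) T := ⟨le_refl 0, hT.le⟩
  have hv0 : v 0 < 0 := hvneg 0 h0T
  have hvt : v t < 0 := hvneg t ⟨ht0, htT⟩
  -- derivative of w = v⁻¹
  have hw : ∀ s ∈ Set.Icc (0:ℝ) T,
      HasDerivAt (fun s => (v s)⁻¹) (1 + K s / (v s) ^ 2) s := by
    intro s hs
    have hvs : v s < 0 := hvneg s hs
    have h := (hv' s hs).inv (ne_of_lt hvs)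
    have hne : (v s) ^ 2 ≠ 0 := pow_ne_zero 2 (ne_of_lt hvs)
    have heq : -(-v s ^ 2 - K s) / v s ^ 2 = 1 + K s / v s ^ 2 := by
      rw [neg_sub, sub_neg_eq_add, add_div, div_self hne]
      ring
    rw [heq] at h
    exact h
  have hsub : Set.Icc (0:ℝ) t ⊆ Set.Icc (0:ℝ) T := Set.Icc_subset_Icc le_rfl htT
  have hsubi : Set.Ioo (0:ℝ) t ⊆ Set.Icc (0:ℝ) T := fun x hx =>
    hsub ⟨hx.1.le, hx.2.le⟩
  have hKbound : ∀ s ∈ Set.Icc (0:ℝ) T,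
      -ε ≤ K s / (v s) ^ 2 ∧ K s / (v s) ^ 2 ≤ ε := by
    intro s hs
    have hvs : v s < 0 := hvneg s hs
    have hsq : 0 < (v s) ^ 2 := by nlinarith [mul_pos (neg_pos.mpr hvs) (neg_pos.mpr hvs)]
    have h := abs_le.mp (hKv s hs)
    constructor
    · rw [le_div_iff₀ hsq]
      nlinarith [h.1]
    · rw [div_le_iff₀ hsq]
      nlinarith [h.2]
  -- lower bound on w t : w 0 + (1-ε) t ≤ w t
  have hlow : (v 0)⁻¹ + (1 - ε) * t ≤ (v t)⁻¹ := by
    set g : ℝ → ℝ := fun s => (v s)⁻¹ - (1 - ε) * s with hg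
    have hgd : ∀ s ∈ Set.Icc (0:ℝ) T,
        HasDerivAt g (1 + K s / (v s) ^ 2 - (1 - ε)) s := by
      intro s hs
      have := (hw s hs).sub (((hasDerivAt_id s).const_mul (1 - ε)))
      exact this.congr_deriv (by ring)
    have hmono : MonotoneOn g (Set.Icc 0 t) := by
      apply monotoneOn_of_deriv_nonneg (convex_Icc 0 t)
      · intro s hs
        exact ((hgd s (hsub hs)).continuousAt).continuousWithinAt
      · intro s hs
        rw [interior_Icc] at hs
        exact ((hgd s (hsubi hs)).differentiableAt).differentiableWithinAt
      · intro s hs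
        rw [interior_Icc] at hs
        rw [(hgd s (hsubi hs)).deriv]
        have := (hKbound s (hsubi hs)).1
        linarith
    have h01 : (0:ℝ) ∈ Set.Icc (0:ℝ) t := ⟨le_refl 0, ht0⟩
    have ht1 : t ∈ Set.Icc (0:ℝ) t := ⟨ht0, le_refl t⟩
    have := hmono h01 ht1 ht0
    simp only [hg] at this
    linarith
  -- upper bound on w t : w t ≤ w 0 + (1+ε) t
  have hup : (v t)⁻¹ ≤ (v 0)⁻¹ + (1 + ε) * t := by
    set g : ℝ → ℝ := fun s => (1 + ε) * s - (v s)⁻¹ with hg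
    have hgd : ∀ s ∈ Set.Icc (0:ℝ) T,
        HasDerivAt g ((1 + ε) - (1 + K s / (v s) ^ 2)) s := by
      intro s hs
      have := (((hasDerivAt_id s).const_mul (1 + ε))).sub (hw s hs)
      exact this.congr_deriv (by ring)
    have hmono : MonotoneOn g (Set.Icc 0 t) := by
      apply monotoneOn_of_deriv_nonneg (convex_Icc 0 t)
      · intro s hs
        exact ((hgd s (hsub hs)).continuousAt).continuousWithinAt
      · intro s hs
        rw [interior_Icc] at hs
        exact ((hgd s (hsubi hs)).differentiableAt).differentiableWithinAt
      · intro s hs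
        rw [interior_Icc] at hs
        rw [(hgd s (hsubi hs)).deriv]
        have := (hKbound s (hsubi hs)).2
        linarith
    have h01 : (0:ℝ) ∈ Set.Icc (0:ℝ) t := ⟨le_refl 0, ht0⟩
    have ht1 : t ∈ Set.Icc (0:ℝ) t := ⟨ht0, le_refl t⟩
    have := hmono h01 ht1 ht0
    simp only [hg] at this
    linarith
  obtain ⟨hDp, hDm⟩ := hden t ⟨ht0, htT⟩
  have hi0 : v 0 * (v 0)⁻¹ = 1 := mul_inv_cancel₀ (ne_of_lt hv0)
  have hit : v t * (v t)⁻¹ = 1 := mul_inv_cancel₀ (ne_of_lt hvt)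
  have hpos : 0 < v 0 * v t := mul_pos_of_neg_of_neg hv0 hvt
  constructor
  · rw [div_le_iff₀ hDp]
    nlinarith [mul_le_mul_of_nonneg_left hup hpos.le]
  · rw [le_div_iff₀ hDm]
    nlinarith [mul_le_mul_of_nonneg_left hlow hpos.le]
end

section
/- Under the hypotheses of the previous integral lemma (r C¹ with r(0)=1, (1+ε)m ≤ r' ≤ (1−ε)m < 0, and q ≤ r ≤ q/(1−ε) on [0,T]), the logarithmic case s = 1 holds: ∫₀^T q(t)^{−1} dt ≤ −(1/(1−ε)²)·(1/m)·( log(1/(1−ε)) − log q(T) ). -/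
set_option maxHeartbeats 1000000


/-- Lemma 3.4 of the paper, the logarithmic case `s = 1`. -/
theorem integral_q_inv_le (T m ε : ℝ) (hT : 0 < T) (hm : m < 0)
    (hε0 : 0 < ε) (hε1 : ε < 1)
    (q r r' : ℝ → ℝ) (hq : ContinuousOn q (Set.Icc 0 T))
    (hqpos : ∀ t ∈ Set.Icc 0 T, 0 < q t) (hq1 : ∀ t ∈ Set.Icc 0 T, q t ≤ 1)
    (hr0 : r 0 = 1)
    (hr' : ∀ t ∈ Set.Icc 0 T, HasDerivAt r (r' t) t)
    (hr'lb : ∀ t ∈ Set.Icc 0 T, (1 + ε) * m ≤ r' t)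
    (hr'ub : ∀ t ∈ Set.Icc 0 T, r' t ≤ (1 - ε) * m)
    (hqr : ∀ t ∈ Set.Icc 0 T, q t ≤ r t ∧ r t ≤ q t / (1 - ε)) :
    (∫ t in (0:ℝ)..T, (q t)⁻¹) ≤
      -(1 / (1 - ε) ^ 2) * (1 / m) *
        (Real.log (1 / (1 - ε)) - Real.log (q T)) := by
  have h1ε : (0:ℝ) < 1 - ε := by linarith
  have hC : (1 - ε) ^ 2 * m < 0 := mul_neg_of_pos_of_neg (pow_pos h1ε 2) hm
  set C : ℝ := (1 - ε) ^ 2 * m with hCdef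
  have hrpos : ∀ t ∈ Set.Icc 0 T, 0 < r t := fun t ht =>
    lt_of_lt_of_le (hqpos t ht) (hqr t ht).1
  have hTmem : T ∈ Set.Icc (0:ℝ) T := Set.right_mem_Icc.mpr hT.le
  have h0mem : (0:ℝ) ∈ Set.Icc (0:ℝ) T := Set.left_mem_Icc.mpr hT.le
  -- r is continuous on Icc
  have hrcont : ContinuousOn r (Set.Icc 0 T) := fun t ht =>
    ((hr' t ht).continuousAt).continuousWithinAt
  -- r is antitone on Icc
  have hanti : AntitoneOn r (Set.Icc 0 T) := by
    apply StrictAntiOn.antitoneOn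
    apply strictAntiOn_of_deriv_neg (convex_Icc 0 T) hrcont
    intro x hx
    rw [interior_Icc] at hx
    have hx' : x ∈ Set.Icc (0:ℝ) T := Set.mem_Icc_of_Ioo hx
    rw [(hr' x hx').deriv]
    have := hr'ub x hx'
    nlinarith
  have hrT : ∀ t ∈ Set.Icc 0 T, r T ≤ r t := fun t ht => hanti ht hTmem ht.2
  have hqT : 0 < q T := hqpos T hTmem
  -- pointwise bound
  have key : ∀ t ∈ Set.Icc 0 T, (q t)⁻¹ ≤ 1 / C * (r' t / r t) := by
    intro t ht
    have ha := hqpos t ht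
    have hb := hrpos t ht
    have hd := hr'ub t ht
    have h2 := (hqr t ht).2
    have h2' : (1 - ε) * r t ≤ q t := by
      rw [le_div_iff₀ h1ε] at h2
      linarith
    have hrw : 1 / C * (r' t / r t) = r' t / (C * r t) := by
      field_simp
    rw [hrw]
    have hD : C * r t < 0 := mul_neg_of_neg_of_pos hC hb
    have hd0 : r' t < 0 := lt_of_le_of_lt hd (by nlinarith)
    rw [inv_eq_one_div, le_div_iff_of_neg hD, one_div_mul_eq_div, le_div_iff₀ ha, hCdef]
    nlinarith [mul_le_mul_of_nonpos_right h2' hd0.le,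
      mul_le_mul_of_nonneg_left hd (by positivity : (0:ℝ) ≤ (1 - ε) * r t)]
  -- integrability of 1/q
  have hint1 : IntervalIntegrable (fun t => (q t)⁻¹) MeasureTheory.volume 0 T := by
    apply ContinuousOn.intervalIntegrable
    rw [Set.uIcc_of_le hT.le]
    exact hq.inv₀ (fun t ht => (hqpos t ht).ne')
  -- integrability of r'/r
  have hint2 : IntervalIntegrable (fun t => r' t / r t) MeasureTheory.volume 0 T := by
    rw [intervalIntegrable_iff_integrableOn_Ioc_of_le hT.le]
    have hsub : Set.Ioc (0:ℝ) T ⊆ Set.Icc 0 T := Set.Ioc_subset_Icc_self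
    have heq : Set.EqOn (fun t => r' t / r t) (fun t => deriv r t / r t) (Set.Ioc 0 T) := by
      intro t ht; simp only; rw [(hr' t (hsub ht)).deriv]
    apply MeasureTheory.IntegrableOn.congr_fun _ heq.symm measurableSet_Ioc
    have hmeas : MeasureTheory.AEStronglyMeasurable (fun t => deriv r t / r t)
        (MeasureTheory.volume.restrict (Set.Ioc (0:ℝ) T)) :=
      ((measurable_deriv r).aemeasurable.div
        ((hrcont.mono hsub).aemeasurable measurableSet_Ioc)).aestronglyMeasurable
    refine ⟨hmeas, MeasureTheory.HasFiniteIntegral.of_bounded (C := (-(1 + ε) * m) / q T) ?_⟩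
    rw [MeasureTheory.ae_restrict_iff' measurableSet_Ioc]
    apply MeasureTheory.ae_of_all
    intro t ht
    exact by
      have ht' := hsub ht
      rw [(hr' t ht').deriv]
      have hb := hrpos t ht'
      have hbT : q T ≤ r t := le_trans ((hqr T hTmem).1) (hrT t ht')
      have hd1 := hr'lb t ht'
      have hd2 := hr'ub t ht'
      have hd0 : r' t < 0 := lt_of_le_of_lt hd2 (by nlinarith)
      rw [Real.norm_eq_abs, abs_div, abs_of_pos hb, abs_of_neg hd0]
      apply div_le_div₀ (by nlinarith) (by linarith) hqT hbT
  have hint2' : IntervalIntegrable (fun t => 1 / C * (r' t / r t)) MeasureTheory.volume 0 T :=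
    hint2.const_mul _
  -- compare integrals
  have hmono : (∫ t in (0:ℝ)..T, (q t)⁻¹) ≤ ∫ t in (0:ℝ)..T, 1 / C * (r' t / r t) := by
    apply intervalIntegral.integral_mono_on hT.le hint1 hint2' key
  -- FTC
  have hftc : (∫ t in (0:ℝ)..T, r' t / r t) = Real.log (r T) := by
    have : (∫ t in (0:ℝ)..T, r' t / r t) = Real.log (r T) - Real.log (r 0) := by
      apply intervalIntegral.integral_eq_sub_of_hasDerivAt
      · intro t ht
        rw [Set.uIcc_of_le hT.le] at ht
        exact (hr' t ht).log (hrpos t ht).ne'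
      · exact hint2
    rw [this, hr0, Real.log_one, sub_zero]
  have hval : (∫ t in (0:ℝ)..T, 1 / C * (r' t / r t)) = 1 / C * Real.log (r T) := by
    rw [intervalIntegral.integral_const_mul, hftc]
  rw [hval] at hmono
  refine le_trans hmono ?_
  -- final comparison
  have hlog1 : Real.log ((1 - ε) * q T) ≤ Real.log (r T) := by
    apply Real.log_le_log (by positivity)
    calc (1 - ε) * q T ≤ q T := by nlinarith
    _ ≤ r T := (hqr T hTmem).1
  rw [Real.log_mul h1ε.ne' hqT.ne'] at hlog1
  have h1C : 1 / C < 0 := by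
    apply div_neg_of_pos_of_neg one_pos hC
  have := mul_le_mul_of_nonpos_left hlog1 h1C.le
  refine le_trans this (le_of_eq ?_)
  rw [one_div (1 - ε), Real.log_inv]
  rw [hCdef]
  field_simp
  ring
end
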